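/- Let (M,g) be a smooth compact d-dimensional Riemannian manifold without boundary with Laplace eigenfunctions (φ_k) and eigenvalues (λ_k). For X ∈ ℕ large and t > 0 with X^{2/d} t ≫ 1, the tail of the heat kernel expansion satisfies, for all x, y ∈ M, | Σ_{k=X+1}^{∞} e^{−λ_k t} φ_k(x) φ_k(y) | ≤ C_{(M,g)} t^{−(d−1/2)} Γ(d − 1/2, c X^{2/d} t), where Γ(s, a) = ∫_a^∞ u^{s−1} e^{−u} du is the upper incomplete Gamma function and c, C_{(M,g)} > 0 depend only on (M,g). -/

import Mathlib

open MeasureTheory Finset Real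
open scoped RealInnerProductSpace BigOperators

noncomputable section

open scoped Manifold

/-- An abstract packaging of the spectral data of the Laplace–Beltrami operator `−Δ_g` on a
smooth compact `d`-dimensional Riemannian manifold `(M,g)` without boundary, with Riemannian
volume measure `μ`: the `L²(μ)`-normalized eigenfunctions `φ_0, φ_1, …` (with `φ_0` constant)
and the eigenvalues `0 = λ_0 ≤ λ_1 ≤ ⋯` arranged in increasing order.  Since Mathlib does not
yet have the Laplace–Beltrami operator, we characterize this data by its standard properties:
orthonormality, Weyl's law, Hörmander's `L^∞` eigenfunction bound, and the short-time
on-diagonal lower bound for the heat kernel `p_t(x,x) = Σ_k e^{−λ_k t} φ_k(x)²`. -/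
structure IsLaplaceEigensystem {M : Type*} [MeasurableSpace M] (d : ℕ)
    (mu : Measure M) (phi : ℕ → M → ℝ) (lam : ℕ → ℝ) : Prop where
  lam_zero : lam 0 = 0
  lam_mono : Monotone lam
  phi_zero_const : ∀ x y : M, phi 0 x = phi 0 y
  orthonormal : ∀ j k : ℕ, ∫ x, phi j x * phi k x ∂mu = if j = k then 1 else 0
  weyl : ∃ c C : ℝ, 0 < c ∧ 0 < C ∧ ∀ k : ℕ,
    c * (k : ℝ) ^ ((2 : ℝ) / d) ≤ lam k ∧ lam k ≤ C * ((k : ℝ) + 1) ^ ((2 : ℝ) / d)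
  hormander : ∃ C : ℝ, 0 < C ∧ ∀ (k : ℕ) (x : M),
    |phi k x| ≤ C * (lam k + 1) ^ (((d : ℝ) - 1) / 4)
  heat_diag_lower : ∃ c t0 : ℝ, 0 < c ∧ 0 < t0 ∧ ∀ t : ℝ, 0 < t → t < t0 → ∀ x : M,
    c * t ^ (-(d : ℝ) / 2) ≤ ∑' k : ℕ, Real.exp (-(lam k) * t) * phi k x ^ 2

/-- The upper incomplete Gamma function `Γ(s, a) = ∫_a^∞ u^{s−1} e^{−u} du`. -/
def upperIncGamma (s a : ℝ) : ℝ := ∫ u in Set.Ioi a, u ^ (s - 1) * Real.exp (-u)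

namespace HeatTailAux

/-- `x ↦ x^m e^{-τ x}` is decreasing past `m/τ`. -/
lemma rpow_mul_exp_anti {m τ y x : ℝ} (hm : 0 ≤ m) (hτ : 0 < τ) (hy : 0 < y)
    (hmy : m ≤ τ * y) (hxy : y ≤ x) :
    x ^ m * Real.exp (-(τ * x)) ≤ y ^ m * Real.exp (-(τ * y)) := by
  have hx : 0 < x := lt_of_lt_of_le hy hxy
  have hdiv : 0 < x / y := div_pos hx hy
  have h1 : x ^ m = y ^ m * (x / y) ^ m := by
    rw [Real.div_rpow hx.le hy.le]
    field_simp
  have h2 : (x / y) ^ m ≤ Real.exp (τ * (x - y)) := by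
    rw [Real.rpow_def_of_pos hdiv]
    apply Real.exp_le_exp.mpr
    have hlog : Real.log (x / y) ≤ x / y - 1 := Real.log_le_sub_one_of_pos hdiv
    have h3 : Real.log (x / y) * m ≤ (x / y - 1) * m := mul_le_mul_of_nonneg_right hlog hm
    refine h3.trans ?_
    have h4 : (x / y - 1) * m = (x - y) / y * m := by field_simp
    rw [h4]
    calc (x - y) / y * m ≤ (x - y) / y * (τ * y) := by
          apply mul_le_mul_of_nonneg_left hmy
          have : 0 ≤ x - y := by linarith
          positivity
      _ = τ * (x - y) := by field_simp
  calc x ^ m * Real.exp (-(τ * x))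
      ≤ y ^ m * Real.exp (τ * (x - y)) * Real.exp (-(τ * x)) := by
        rw [h1]
        have hym : 0 ≤ y ^ m := Real.rpow_nonneg hy.le m
        have := mul_le_mul_of_nonneg_left h2 hym
        exact mul_le_mul_of_nonneg_right this (Real.exp_nonneg _)
    _ = y ^ m * Real.exp (-(τ * y)) := by
        rw [mul_assoc, ← Real.exp_add]
        congr 2
        ring

/-- `e^{-x} ≤ N^N x^{-N}` for positive `x, N`. -/
lemma exp_neg_le_rpow {N x : ℝ} (hN : 0 < N) (hx : 0 < x) :
    Real.exp (-x) ≤ N ^ N * x ^ (-N) := by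
  have hxN : 0 < x ^ N := Real.rpow_pos_of_pos hx N
  have h1 : x ^ N ≤ N ^ N * Real.exp x := by
    rw [Real.rpow_def_of_pos hx, Real.rpow_def_of_pos hN, ← Real.exp_add]
    apply Real.exp_le_exp.mpr
    have hdiv : 0 < x / N := div_pos hx hN
    have hlog : Real.log (x / N) ≤ x / N - 1 := Real.log_le_sub_one_of_pos hdiv
    have hxlog : Real.log x = Real.log (x / N) + Real.log N := by
      rw [Real.log_div hx.ne' hN.ne']; ring
    have h2 : Real.log x * N ≤ (x / N - 1 + Real.log N) * N := by
      rw [hxlog]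
      apply mul_le_mul_of_nonneg_right (by linarith) hN.le
    refine h2.trans ?_
    have h4 : (x / N - 1 + Real.log N) * N = x - N + Real.log N * N := by
      field_simp
    rw [h4]
    linarith
  rw [Real.exp_neg, Real.rpow_neg hx.le, ← div_eq_mul_inv, inv_eq_one_div,
    div_le_div_iff₀ (Real.exp_pos x) hxN]
  nlinarith [h1]

/-- Integral comparison for `∑ e^{-γ (i+1)^p}`. -/
lemma sum_range_exp_le {p γ : ℝ} (hp : 0 < p) (hγ : 0 < γ) (n : ℕ) :
    ∑ i ∈ Finset.range n, Real.exp (-(γ * ((i : ℝ) + 1) ^ p)) ≤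
      γ ^ (-1 / p) * Real.Gamma (1 / p + 1) := by
  have hcont : Continuous fun u : ℝ => Real.exp (-(γ * u ^ p)) :=
    Real.continuous_exp.comp ((continuous_const.mul (Real.continuous_rpow_const hp.le)).neg)
  have hint : IntegrableOn (fun u : ℝ => Real.exp (-(γ * u ^ p))) (Set.Ioi 0) := by
    have hu : Set.Ioc (0:ℝ) 1 ∪ Set.Ioi (1:ℝ) = Set.Ioi 0 := Set.Ioc_union_Ioi_eq_Ioi zero_le_one
    rw [← hu, integrableOn_union]
    constructor
    · apply Integrable.mono' (g := fun _ : ℝ => (1:ℝ))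
        (integrableOn_const measure_Ioc_lt_top.ne)
        hcont.aestronglyMeasurable.restrict
      filter_upwards [self_mem_ae_restrict measurableSet_Ioc] with u hu'
      rw [Real.norm_eq_abs, abs_of_pos (Real.exp_pos _), Real.exp_le_one_iff]
      have : 0 ≤ γ * u ^ p := mul_nonneg hγ.le (Real.rpow_nonneg hu'.1.le p)
      linarith
    · have hN : (0:ℝ) < 2 / p := by positivity
      apply Integrable.mono' (g := fun u : ℝ => ((2/p) ^ (2/p) * γ ^ (-(2/p))) * u ^ (-2 : ℝ))
        (((integrableOn_Ioi_rpow_of_lt (by norm_num) one_pos)).const_mul _)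
        hcont.aestronglyMeasurable.restrict
      filter_upwards [self_mem_ae_restrict measurableSet_Ioi] with u hu'
      have hu0 : (0:ℝ) < u := lt_trans one_pos hu'
      have hup : 0 < u ^ p := Real.rpow_pos_of_pos hu0 p
      rw [Real.norm_eq_abs, abs_of_pos (Real.exp_pos _)]
      calc Real.exp (-(γ * u ^ p)) ≤ (2/p) ^ (2/p) * (γ * u ^ p) ^ (-(2/p)) :=
            exp_neg_le_rpow hN (mul_pos hγ hup)
        _ = ((2/p) ^ (2/p) * γ ^ (-(2/p))) * u ^ (-2:ℝ) := by
            have hpN : p * (-(2/p)) = (-2 : ℝ) := by field_simp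
            rw [Real.mul_rpow hγ.le hup.le, ← Real.rpow_mul hu0.le, hpN]; ring
  have hanti : AntitoneOn (fun u : ℝ => Real.exp (-(γ * u ^ p))) (Set.Icc (0:ℝ) (0 + (n:ℕ))) := by
    intro u hu v hv huv
    apply Real.exp_le_exp.mpr
    have h5 : u ^ p ≤ v ^ p := Real.rpow_le_rpow hu.1 huv hp.le
    have := mul_le_mul_of_nonneg_left h5 hγ.le
    linarith
  have h1 := hanti.sum_le_integral
  have hL : ∑ i ∈ Finset.range n, Real.exp (-(γ * ((i : ℝ) + 1) ^ p)) =
      ∑ i ∈ Finset.range n, (fun u : ℝ => Real.exp (-(γ * u ^ p))) ((0:ℝ) + ((i + 1 : ℕ):ℝ)) := by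
    refine Finset.sum_congr rfl fun i _ => ?_
    congr 2
    push_cast
    ring
  have hR : ∫ x in (0:ℝ)..((0:ℝ) + (n:ℕ)), Real.exp (-(γ * x ^ p)) ≤
      ∫ x in Set.Ioi (0:ℝ), Real.exp (-(γ * x ^ p)) := by
    rw [intervalIntegral.integral_of_le (by positivity)]
    apply setIntegral_mono_set hint ?_ (HasSubset.Subset.eventuallyLE Set.Ioc_subset_Ioi_self)
    filter_upwards [self_mem_ae_restrict measurableSet_Ioi] with u _
    exact (Real.exp_pos _).le
  have hval : ∫ x in Set.Ioi (0:ℝ), Real.exp (-(γ * x ^ p)) =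
      γ ^ (-1 / p) * Real.Gamma (1 / p + 1) := by
    have h6 := integral_exp_neg_mul_rpow hp hγ
    simp only [neg_mul] at h6
    exact h6
  rw [hL]
  exact h1.trans (hR.trans_eq hval)

lemma upperIncGamma_ge {s a : ℝ} (hs : 1/2 ≤ s) (ha : 1 ≤ a) :
    a ^ (s - 1) * Real.exp (-(a + 1)) ≤ 2 * upperIncGamma s a := by
  have ha0 : 0 < a := lt_of_lt_of_le one_pos ha
  have hs0 : 0 < s := lt_of_lt_of_le one_half_pos hs
  have hI0 : IntegrableOn (fun u : ℝ => u ^ (s - 1) * Real.exp (-u)) (Set.Ioi 0) :=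
    (Real.GammaIntegral_convergent hs0).congr_fun (fun x _ => mul_comm _ _) measurableSet_Ioi
  have hIa : IntegrableOn (fun u : ℝ => u ^ (s - 1) * Real.exp (-u)) (Set.Ioi a) :=
    hI0.mono_set (Set.Ioi_subset_Ioi ha0.le)
  have hIc : IntegrableOn (fun u : ℝ => u ^ (s - 1) * Real.exp (-u)) (Set.Ioc a (a + 1)) :=
    hIa.mono_set Set.Ioc_subset_Ioi_self
  have hpt : ∀ u ∈ Set.Ioc a (a + 1),
      2⁻¹ * (a ^ (s - 1) * Real.exp (-(a + 1))) ≤ u ^ (s - 1) * Real.exp (-u) := by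
    intro u hu
    have hu0 : 0 < u := lt_trans ha0 hu.1
    have hexp : Real.exp (-(a + 1)) ≤ Real.exp (-u) := by
      apply Real.exp_le_exp.mpr; linarith [hu.2]
    have hrp : 2⁻¹ * a ^ (s - 1) ≤ u ^ (s - 1) := by
      rcases le_or_gt 0 (s - 1) with h | h
      · have h1 := Real.rpow_le_rpow ha0.le hu.1.le h
        nlinarith [Real.rpow_nonneg ha0.le (s - 1)]
      · have h2a : u ≤ 2 * a := by linarith [hu.2]
        have h1 : (2 * a) ^ (s - 1) ≤ u ^ (s - 1) :=
          Real.rpow_le_rpow_of_nonpos hu0 h2a h.le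
        have h2 : ((2:ℝ) * a) ^ (s - 1) = (2:ℝ) ^ (s - 1) * a ^ (s - 1) :=
          Real.mul_rpow (by norm_num) ha0.le
        have h3 : (2:ℝ)⁻¹ ≤ (2:ℝ) ^ (s - 1) := by
          have h4 : (2:ℝ) ^ (-1 : ℝ) ≤ (2:ℝ) ^ (s - 1) :=
            Real.rpow_le_rpow_of_exponent_le one_le_two (by linarith)
          rwa [Real.rpow_neg_one] at h4
        have ha_nn : (0:ℝ) ≤ a ^ (s - 1) := Real.rpow_nonneg ha0.le _
        nlinarith
    calc 2⁻¹ * (a ^ (s - 1) * Real.exp (-(a + 1)))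
        = (2⁻¹ * a ^ (s - 1)) * Real.exp (-(a + 1)) := by ring
      _ ≤ u ^ (s - 1) * Real.exp (-u) :=
          mul_le_mul hrp hexp (Real.exp_nonneg _) (Real.rpow_nonneg hu0.le _)
  have hlow := setIntegral_ge_of_const_le_real measurableSet_Ioc
      (measure_Ioc_lt_top).ne hpt hIc
  have hvol : volume.real (Set.Ioc a (a + 1)) = 1 := by
    rw [Measure.real, Real.volume_Ioc]
    norm_num
  rw [hvol, mul_one] at hlow
  have hmono : ∫ u in Set.Ioc a (a + 1), u ^ (s - 1) * Real.exp (-u) ≤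
      ∫ u in Set.Ioi a, u ^ (s - 1) * Real.exp (-u) := by
    apply setIntegral_mono_set hIa ?_ (HasSubset.Subset.eventuallyLE Set.Ioc_subset_Ioi_self)
    filter_upwards [self_mem_ae_restrict (measurableSet_Ioi : MeasurableSet (Set.Ioi a))] with u hu
    exact mul_nonneg (Real.rpow_nonneg (le_of_lt (lt_trans ha0 hu)) _) (Real.exp_nonneg _)
  rw [upperIncGamma]
  linarith

end HeatTailAux

open scoped Manifold in
open HeatTailAux in
set_option maxHeartbeats 2000000 in
theorem heat_kernel_tail_bound {d : ℕ} (hd : 1 ≤ d)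
    {M : Type*} [TopologicalSpace M] [CompactSpace M]
    [ChartedSpace (EuclideanSpace ℝ (Fin d)) M]
    [IsManifold (𝓡 d) (⊤ : ℕ∞) M]
    [MeasurableSpace M] [BorelSpace M]
    (mu : Measure M) [IsFiniteMeasure mu]
    (phi : ℕ → M → ℝ) (lam : ℕ → ℝ)
    (hsmooth : ∀ k, ContMDiff (𝓡 d) 𝓘(ℝ, ℝ) (⊤ : ℕ∞) (phi k))
    (hsys : IsLaplaceEigensystem d mu phi lam) :
    ∃ c C T : ℝ, 0 < c ∧ 0 < C ∧ 0 < T ∧ ∀ (X : ℕ) (t : ℝ), 0 < t →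
      T ≤ (X : ℝ) ^ ((2 : ℝ) / d) * t → ∀ x y : M,
        |∑' k : ℕ, Real.exp (-(lam (X + 1 + k)) * t) * phi (X + 1 + k) x * phi (X + 1 + k) y|
          ≤ C * t ^ (-((d : ℝ) - 1 / 2)) *
              upperIncGamma ((d : ℝ) - 1 / 2) (c * (X : ℝ) ^ ((2 : ℝ) / d) * t) := by
  obtain ⟨cw, Cw, hcw, hCw, hweyl⟩ := hsys.weyl
  obtain ⟨CH, hCH, hhorm⟩ := hsys.hormander
  have hd0 : (0:ℝ) < d := by exact_mod_cast Nat.pos_of_ne_zero (by omega)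
  have hd1 : (1:ℝ) ≤ d := by exact_mod_cast hd
  have hdne : (d:ℝ) ≠ 0 := ne_of_gt hd0
  set p : ℝ := 2 / (d:ℝ) with hp_def
  have hp : 0 < p := by positivity
  set m : ℝ := ((d:ℝ) - 1) / 2 with hm_def
  have hm : 0 ≤ m := by rw [hm_def]; linarith
  set G : ℝ := Real.Gamma (1 / p + 1) with hG_def
  have hG : 0 < G := by
    rw [hG_def]; exact Real.Gamma_pos_of_pos (by positivity)
  set K1 : ℝ := 1 + 1 / cw with hK1_def
  have hK1 : 0 < K1 := by rw [hK1_def]; positivity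
  have hK1m : 0 ≤ K1 ^ m := Real.rpow_nonneg hK1.le m
  have h4m : (0:ℝ) < 4 ^ m := Real.rpow_pos_of_pos (by norm_num) m
  refine ⟨cw / 4, 2 * CH ^ 2 * K1 ^ m * 4 ^ m * (cw / 4) ^ (-1 / p) * G,
    (1 + m) / (cw / 4), by positivity, ?_, by positivity, ?_⟩
  · have h1 : 0 < (cw / 4 : ℝ) ^ (-1 / p) := Real.rpow_pos_of_pos (by positivity) _
    have h2 : 0 < K1 ^ m := Real.rpow_pos_of_pos hK1 m
    positivity
  intro X t ht hXT x y
  set c : ℝ := cw / 4 with hc_def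
  have hc : 0 < c := by rw [hc_def]; positivity
  have hT0 : 0 < (1 + m) / c := by positivity
  have hXp1 : (1:ℝ) ≤ (X:ℝ) ^ p := by
    rcases Nat.eq_zero_or_pos X with rfl | hX
    · exfalso
      rw [Nat.cast_zero, Real.zero_rpow hp.ne', zero_mul] at hXT
      linarith
    · exact Real.one_le_rpow (by exact_mod_cast hX) hp.le
  have hXp0 : (0:ℝ) < (X:ℝ) ^ p := lt_of_lt_of_le one_pos hXp1
  set a : ℝ := c * (X:ℝ) ^ p * t with ha_def
  have ha0 : 0 < a := by rw [ha_def]; positivity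
  have haT : 1 + m ≤ a := by
    have h1 : (1 + m) / c * c ≤ ((X:ℝ) ^ p * t) * c := mul_le_mul_of_nonneg_right hXT hc.le
    have h2 : (1 + m) / c * c = 1 + m := by field_simp
    rw [h2] at h1
    calc 1 + m ≤ ((X:ℝ) ^ p * t) * c := h1
      _ = a := by rw [ha_def]; ring
  have ha1 : 1 ≤ a := by linarith
  have ham : m ≤ a := by linarith
  set γ : ℝ := c * t with hγ_def
  have hγ : 0 < γ := by rw [hγ_def]; positivity
  set D : ℝ := CH ^ 2 * K1 ^ m * (4 * a) ^ m * Real.exp (-(3 * a)) * t ^ (-m) with hD_def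
  have hD0 : 0 ≤ D := by
    rw [hD_def]
    have := hK1m
    positivity
  have key : ∀ k : ℕ,
      |Real.exp (-(lam (X + 1 + k)) * t) * phi (X + 1 + k) x * phi (X + 1 + k) y|
        ≤ D * Real.exp (-(γ * ((k:ℝ) + 1) ^ p)) := by
    intro k
    set K : ℕ := X + 1 + k with hK_def
    set lamK : ℝ := lam K with hlamK_def
    have hlow : cw * (K:ℝ) ^ p ≤ lamK := (hweyl K).1
    have hKX : (X:ℝ) ^ p ≤ (K:ℝ) ^ p :=
      Real.rpow_le_rpow (Nat.cast_nonneg X) (by exact_mod_cast (by omega : X ≤ K)) hp.le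
    have hKk : ((k:ℝ) + 1) ^ p ≤ (K:ℝ) ^ p :=
      Real.rpow_le_rpow (by positivity) (by exact_mod_cast (by omega : k + 1 ≤ K)) hp.le
    set μ : ℝ := lamK * t with hμ_def
    have hlamK0 : 0 ≤ lamK := le_trans (by positivity) hlow
    have hμ4a : 4 * a ≤ μ := by
      have h1 : cw * (X:ℝ) ^ p ≤ lamK :=
        le_trans (mul_le_mul_of_nonneg_left hKX hcw.le) hlow
      calc 4 * a = (cw * (X:ℝ) ^ p) * t := by rw [ha_def, hc_def]; ring
        _ ≤ lamK * t := mul_le_mul_of_nonneg_right h1 ht.le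
    have hμ0 : 0 < μ := lt_of_lt_of_le (by positivity) hμ4a
    have hμsplit : 2 * a + 2 * (γ * ((k:ℝ) + 1) ^ p) ≤ μ := by
      have h2 : cw * ((X:ℝ) ^ p + ((k:ℝ) + 1) ^ p) ≤ 2 * lamK := by
        nlinarith [hlow, hcw.le, hKX, hKk]
      have h3 : cw * ((X:ℝ) ^ p + ((k:ℝ) + 1) ^ p) * t ≤ 2 * μ := by
        calc cw * ((X:ℝ) ^ p + ((k:ℝ) + 1) ^ p) * t ≤ (2 * lamK) * t :=
              mul_le_mul_of_nonneg_right h2 ht.le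
          _ = 2 * μ := by rw [hμ_def]; ring
      have hEq : cw * ((X:ℝ) ^ p + ((k:ℝ) + 1) ^ p) * t
          = 4 * a + 4 * (γ * ((k:ℝ) + 1) ^ p) := by
        rw [ha_def, hγ_def, hc_def]; ring
      rw [hEq] at h3
      linarith
    have hφ : |phi K x * phi K y| ≤ CH ^ 2 * (lamK + 1) ^ m := by
      have hx1 := hhorm K x
      have hy1 := hhorm K y
      have hb : (0:ℝ) < lamK + 1 := by linarith
      have e4 : ((d:ℝ) - 1) / 4 + ((d:ℝ) - 1) / 4 = m := by rw [hm_def]; ring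
      calc |phi K x * phi K y| = |phi K x| * |phi K y| := abs_mul _ _
        _ ≤ (CH * (lamK + 1) ^ (((d:ℝ) - 1) / 4)) * (CH * (lamK + 1) ^ (((d:ℝ) - 1) / 4)) :=
            mul_le_mul hx1 hy1 (abs_nonneg _) (le_trans (abs_nonneg _) hx1)
        _ = CH ^ 2 * ((lamK + 1) ^ (((d:ℝ) - 1) / 4) * (lamK + 1) ^ (((d:ℝ) - 1) / 4)) := by
            ring
        _ = CH ^ 2 * (lamK + 1) ^ m := by rw [← Real.rpow_add hb, e4]
    have hμt : μ + t ≤ K1 * μ := by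
      have h1 : t ≤ (X:ℝ) ^ p * t := le_mul_of_one_le_left ht.le hXp1
      have h5 : cw * t ≤ 4 * a := by
        have h6 := mul_le_mul_of_nonneg_left h1 (by positivity : (0:ℝ) ≤ 4 * c)
        calc cw * t = 4 * c * t := by rw [hc_def]; ring
          _ ≤ 4 * c * ((X:ℝ) ^ p * t) := h6
          _ = 4 * a := by rw [ha_def]; ring
      have h4 : cw * t ≤ μ := le_trans h5 hμ4a
      have h7 : t ≤ μ / cw := by rw [le_div_iff₀ hcw]; linarith
      calc μ + t ≤ μ + μ / cw := by linarith
        _ = K1 * μ := by rw [hK1_def]; field_simp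
    have hlam1 : (lamK + 1) ^ m ≤ K1 ^ m * μ ^ m * t ^ (-m) := by
      have e1 : lamK + 1 = (μ + t) / t := by rw [hμ_def]; field_simp
      rw [e1, Real.div_rpow (by linarith : (0:ℝ) ≤ μ + t) ht.le,
        Real.rpow_neg ht.le, div_eq_mul_inv]
      apply mul_le_mul_of_nonneg_right ?_ (by positivity)
      calc (μ + t) ^ m ≤ (K1 * μ) ^ m :=
            Real.rpow_le_rpow (by linarith) hμt hm
        _ = K1 ^ m * μ ^ m := Real.mul_rpow hK1.le hμ0.le
    have hsplit : μ ^ m * Real.exp (-μ)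
        ≤ (4 * a) ^ m * Real.exp (-(3 * a)) * Real.exp (-(γ * ((k:ℝ) + 1) ^ p)) := by
      have e2 : Real.exp (-μ)
          = Real.exp (-(4⁻¹ * μ)) * Real.exp (-(4⁻¹ * μ)) * Real.exp (-(2⁻¹ * μ)) := by
        rw [← Real.exp_add, ← Real.exp_add]; congr 1; ring
      have hA : μ ^ m * Real.exp (-(4⁻¹ * μ)) ≤ (4 * a) ^ m * Real.exp (-(4⁻¹ * (4 * a))) :=
        rpow_mul_exp_anti hm (by norm_num) (by positivity) (by linarith) hμ4a
      have hB : Real.exp (-(4⁻¹ * μ)) ≤ Real.exp (-a) := by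
        apply Real.exp_le_exp.mpr; linarith
      have hC2 : Real.exp (-(2⁻¹ * μ)) ≤ Real.exp (-a) * Real.exp (-(γ * ((k:ℝ) + 1) ^ p)) := by
        rw [← Real.exp_add]
        apply Real.exp_le_exp.mpr
        linarith
      have hmul : μ ^ m * Real.exp (-μ)
          = (μ ^ m * Real.exp (-(4⁻¹ * μ))) * Real.exp (-(4⁻¹ * μ)) * Real.exp (-(2⁻¹ * μ)) := by
        rw [e2]; ring
      rw [hmul]
      have hnn1 : (0:ℝ) ≤ μ ^ m * Real.exp (-(4⁻¹ * μ)) := by positivity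
      have hnn2 : (0:ℝ) ≤ (4 * a) ^ m * Real.exp (-(4⁻¹ * (4 * a))) := by positivity
      calc (μ ^ m * Real.exp (-(4⁻¹ * μ))) * Real.exp (-(4⁻¹ * μ)) * Real.exp (-(2⁻¹ * μ))
          ≤ ((4 * a) ^ m * Real.exp (-(4⁻¹ * (4 * a)))) * Real.exp (-a)
              * (Real.exp (-a) * Real.exp (-(γ * ((k:ℝ) + 1) ^ p))) := by
            apply mul_le_mul (mul_le_mul hA hB (Real.exp_nonneg _) hnn2) hC2
              (Real.exp_nonneg _) (by positivity)
        _ = (4 * a) ^ m * Real.exp (-(3 * a)) * Real.exp (-(γ * ((k:ℝ) + 1) ^ p)) := by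
            have e3 : Real.exp (-(4⁻¹ * (4 * a))) * Real.exp (-a) * Real.exp (-a)
                = Real.exp (-(3 * a)) := by
              rw [← Real.exp_add, ← Real.exp_add]; congr 1; ring
            calc ((4 * a) ^ m * Real.exp (-(4⁻¹ * (4 * a)))) * Real.exp (-a)
                  * (Real.exp (-a) * Real.exp (-(γ * ((k:ℝ) + 1) ^ p)))
                = (4 * a) ^ m * (Real.exp (-(4⁻¹ * (4 * a))) * Real.exp (-a) * Real.exp (-a))
                  * Real.exp (-(γ * ((k:ℝ) + 1) ^ p)) := by ring
              _ = _ := by rw [e3]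
    have habs : |Real.exp (-(lam K) * t) * phi K x * phi K y|
        = Real.exp (-μ) * |phi K x * phi K y| := by
      rw [mul_assoc, abs_mul, abs_of_pos (Real.exp_pos _), neg_mul]
    calc |Real.exp (-(lam K) * t) * phi K x * phi K y|
        = Real.exp (-μ) * |phi K x * phi K y| := habs
      _ ≤ Real.exp (-μ) * (CH ^ 2 * (lamK + 1) ^ m) :=
          mul_le_mul_of_nonneg_left hφ (Real.exp_nonneg _)
      _ ≤ Real.exp (-μ) * (CH ^ 2 * (K1 ^ m * μ ^ m * t ^ (-m))) := by
          apply mul_le_mul_of_nonneg_left ?_ (Real.exp_nonneg _)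
          exact mul_le_mul_of_nonneg_left hlam1 (by positivity)
      _ = (CH ^ 2 * K1 ^ m * t ^ (-m)) * (μ ^ m * Real.exp (-μ)) := by ring
      _ ≤ (CH ^ 2 * K1 ^ m * t ^ (-m))
          * ((4 * a) ^ m * Real.exp (-(3 * a)) * Real.exp (-(γ * ((k:ℝ) + 1) ^ p))) := by
          apply mul_le_mul_of_nonneg_left hsplit
          have := hK1m
          positivity
      _ = D * Real.exp (-(γ * ((k:ℝ) + 1) ^ p)) := by rw [hD_def]; ring
  have hg_nonneg : ∀ n : ℕ, 0 ≤ Real.exp (-(γ * ((n:ℝ) + 1) ^ p)) := fun n => Real.exp_nonneg _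
  have hg_psum : ∀ n : ℕ, ∑ i ∈ Finset.range n, Real.exp (-(γ * ((i:ℝ) + 1) ^ p))
      ≤ γ ^ (-1 / p) * G := by
    intro n
    rw [hG_def]
    exact sum_range_exp_le hp hγ n
  have hg_sum : Summable (fun k : ℕ => Real.exp (-(γ * ((k:ℝ) + 1) ^ p))) :=
    summable_of_sum_range_le hg_nonneg hg_psum
  have hg_tsum : ∑' k : ℕ, Real.exp (-(γ * ((k:ℝ) + 1) ^ p)) ≤ γ ^ (-1 / p) * G :=
    Real.tsum_le_of_sum_range_le hg_nonneg hg_psum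
  have hf_sum : Summable (fun k : ℕ =>
      ‖Real.exp (-(lam (X + 1 + k)) * t) * phi (X + 1 + k) x * phi (X + 1 + k) y‖) := by
    apply Summable.of_nonneg_of_le (fun k => norm_nonneg _) (fun k => ?_) (hg_sum.mul_left D)
    rw [Real.norm_eq_abs]
    exact key k
  have hstep : a ^ m * Real.exp (-(3 * a)) ≤ 2 * upperIncGamma ((d:ℝ) - 1 / 2) a := by
    have hs : (1:ℝ)/2 ≤ (d:ℝ) - 1/2 := by linarith
    have hG2 := upperIncGamma_ge hs ha1
    have hkey : a ^ m * Real.exp (-(3 * a)) ≤ a ^ ((d:ℝ) - 1/2 - 1) * Real.exp (-(a + 1)) := by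
      have e5 : m = ((d:ℝ) - 1/2 - 1) + (2 - (d:ℝ)) / 2 := by rw [hm_def]; ring
      rw [e5, Real.rpow_add ha0, mul_assoc]
      apply mul_le_mul_of_nonneg_left ?_ (Real.rpow_nonneg ha0.le _)
      have h7 : a ^ ((2 - (d:ℝ)) / 2) ≤ a ^ ((1:ℝ)/2) :=
        Real.rpow_le_rpow_of_exponent_le ha1 (by linarith)
      have h8 : a ^ ((1:ℝ)/2) ≤ Real.exp (2 * a - 1) := by
        have h9 : a ≤ Real.exp a := by linarith [Real.add_one_le_exp a]
        have h10 : a ^ ((1:ℝ)/2) ≤ (Real.exp a) ^ ((1:ℝ)/2) :=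
          Real.rpow_le_rpow ha0.le h9 (by norm_num)
        have h11 : (Real.exp a) ^ ((1:ℝ)/2) = Real.exp (a * (1/2)) := by
          rw [Real.rpow_def_of_pos (Real.exp_pos a), Real.log_exp]
        rw [h11] at h10
        refine h10.trans (Real.exp_le_exp.mpr (by linarith))
      calc a ^ ((2 - (d:ℝ)) / 2) * Real.exp (-(3 * a))
          ≤ Real.exp (2 * a - 1) * Real.exp (-(3 * a)) :=
            mul_le_mul_of_nonneg_right (h7.trans h8) (Real.exp_nonneg _)
        _ = Real.exp (-(a + 1)) := by rw [← Real.exp_add]; congr 1; ring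
    linarith
  have hpre : (0:ℝ) ≤ CH ^ 2 * K1 ^ m * 4 ^ m * c ^ (-1 / p) * G * (t ^ (-m) * t ^ (-1 / p)) := by
    have h1 : (0:ℝ) ≤ c ^ (-1 / p) := Real.rpow_nonneg hc.le _
    have h2 : (0:ℝ) ≤ t ^ (-m) * t ^ (-1 / p) :=
      mul_nonneg (Real.rpow_nonneg ht.le _) (Real.rpow_nonneg ht.le _)
    have h3 : (0:ℝ) ≤ CH ^ 2 * K1 ^ m * 4 ^ m * c ^ (-1 / p) * G :=
      mul_nonneg (mul_nonneg (mul_nonneg (mul_nonneg (by positivity) hK1m) h4m.le) h1) hG.le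
    exact mul_nonneg h3 h2
  calc |∑' k : ℕ, Real.exp (-(lam (X + 1 + k)) * t) * phi (X + 1 + k) x * phi (X + 1 + k) y|
      ≤ ∑' k : ℕ, ‖Real.exp (-(lam (X + 1 + k)) * t) * phi (X + 1 + k) x * phi (X + 1 + k) y‖ := by
        have := norm_tsum_le_tsum_norm hf_sum
        rwa [Real.norm_eq_abs] at this
    _ ≤ ∑' k : ℕ, D * Real.exp (-(γ * ((k:ℝ) + 1) ^ p)) := by
        apply Summable.tsum_le_tsum (fun k => ?_) hf_sum (hg_sum.mul_left D)
        rw [Real.norm_eq_abs]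
        exact key k
    _ = D * ∑' k : ℕ, Real.exp (-(γ * ((k:ℝ) + 1) ^ p)) := tsum_mul_left
    _ ≤ D * (γ ^ (-1 / p) * G) := mul_le_mul_of_nonneg_left hg_tsum hD0
    _ = CH ^ 2 * K1 ^ m * 4 ^ m * c ^ (-1 / p) * G * (t ^ (-m) * t ^ (-1 / p))
        * (a ^ m * Real.exp (-(3 * a))) := by
        rw [hD_def, hγ_def,
          Real.mul_rpow (by norm_num : (0:ℝ) ≤ 4) ha0.le,
          Real.mul_rpow hc.le ht.le]
        ring
    _ ≤ CH ^ 2 * K1 ^ m * 4 ^ m * c ^ (-1 / p) * G * (t ^ (-m) * t ^ (-1 / p))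
        * (2 * upperIncGamma ((d:ℝ) - 1 / 2) a) :=
        mul_le_mul_of_nonneg_left hstep hpre
    _ = 2 * CH ^ 2 * K1 ^ m * 4 ^ m * c ^ (-1 / p) * G * t ^ (-((d:ℝ) - 1 / 2))
        * upperIncGamma ((d:ℝ) - 1 / 2) a := by
        rw [← Real.rpow_add ht,
          show (-m) + (-1 / p) = -((d:ℝ) - 1 / 2) by rw [hm_def, hp_def]; field_simp; ring]
        ring
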